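/- The class of languages accepted by quasi-deterministic all-final simple (qDFS) sensing 5'→3' WK automata properly includes the class of languages accepted by quasi-deterministic all-final 1-limited (qDF1) sensing 5'→3' WK automata: every qDF1 automaton is a qDFS automaton, and the language { a²ⁿb²ⁿ : n ≥ 0 } ∪ { a²⁽ⁿ⁺¹⁾b²ⁿ : n ≥ 0 } is accepted by a qDFS sensing 5'→3' WK automaton but by no qDF1 sensing 5'→3' WK automaton (since in an all-final 1-limited automaton an accepting computation on a word of length k yields accepted words of every length up to k, yet this language contains a word of length 2 but none of length 1). -/

import Mathlib

open Computability

/-- The two-letter alphabet `{a, b}`. -/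
inductive Letter : Type
  | a : Letter
  | b : Letter
deriving DecidableEq

instance : Fintype Letter :=
  ⟨{Letter.a, Letter.b}, fun x => by cases x <;> simp⟩

open Letter

/-- A sensing 5'→3' Watson-Crick automaton over the alphabet `T` with state set `Q`:
an initial state `q0`, a set `F` of final states, and a transition mapping
`δ : Q × T* × T* → 2^Q` that is nonempty for only finitely many triples. -/
structure WKAutomaton (T : Type) (Q : Type) where
  q0 : Q
  F : Set Q
  δ : Q → List T → List T → Set Q
  finite_delta : {t : Q × List T × List T | (δ t.1 t.2.1 t.2.2).Nonempty}.Finite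

namespace WKAutomaton

variable {T Q : Type}

/-- One computation step on configurations:
`(q, x ++ w' ++ y) ⇒ (q', w')` iff `q' ∈ δ q x y`. -/
def Step (A : WKAutomaton T Q) (c c' : Q × List T) : Prop :=
  ∃ x y : List T, c.2 = x ++ c'.2 ++ y ∧ c'.1 ∈ A.δ c.1 x y

/-- The accepted language: words `w` with `(q₀, w) ⇒* (q_F, λ)` for some final `q_F`. -/
def Lang (A : WKAutomaton T Q) : Set (List T) :=
  {w | ∃ qf ∈ A.F, Relation.ReflTransGen A.Step (A.q0, w) (qf, [])}

/-- `A` is deterministic: in every configuration at most one computation step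
(choice of `x`, `y`, `w'`, `q'`) is applicable. -/
def Deterministic (A : WKAutomaton T Q) : Prop :=
  ∀ (q : Q) (w x₁ y₁ w₁ x₂ y₂ w₂ : List T) (q₁ q₂ : Q),
    w = x₁ ++ w₁ ++ y₁ → q₁ ∈ A.δ q x₁ y₁ →
    w = x₂ ++ w₂ ++ y₂ → q₂ ∈ A.δ q x₂ y₂ →
    x₁ = x₂ ∧ y₁ = y₂ ∧ w₁ = w₂ ∧ q₁ = q₂

/-- `A` is quasi-deterministic: for every configuration `(q,w)`, whenever
`(q,w) ⇒ (p,u)` and `(q,w) ⇒ (r,v)`, it holds that `p = r`. -/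
def QuasiDet (A : WKAutomaton T Q) : Prop :=
  ∀ (q : Q) (w : List T) (p r : Q) (u v : List T),
    A.Step (q, w) (p, u) → A.Step (q, w) (r, v) → p = r

/-- `A` is state-deterministic: for every state `q` there is at most one state `p`
with `p ∈ δ(q,u,v)` for some words `u`, `v`. -/
def StateDet (A : WKAutomaton T Q) : Prop :=
  ∀ (q p₁ p₂ : Q) (u₁ v₁ u₂ v₂ : List T),
    p₁ ∈ A.δ q u₁ v₁ → p₂ ∈ A.δ q u₂ v₂ → p₁ = p₂

/-- `A` is stateless: `Q = F = {q₀}`. -/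
def Stateless (A : WKAutomaton T Q) : Prop :=
  (∀ q : Q, q = A.q0) ∧ A.F = {A.q0}

/-- `A` is all-final: `Q = F`. -/
def AllFinal (A : WKAutomaton T Q) : Prop := A.F = Set.univ

/-- `A` is simple: at most one head reads in each step. -/
def Simple (A : WKAutomaton T Q) : Prop :=
  ∀ (q : Q) (u v : List T), (A.δ q u v).Nonempty → u = [] ∨ v = []

/-- `A` is 1-limited: exactly one letter is read in each step. -/
def OneLimited (A : WKAutomaton T Q) : Prop :=
  ∀ (q : Q) (u v : List T), (A.δ q u v).Nonempty →
    (u = [] ∧ v.length = 1) ∨ (u.length = 1 ∧ v = [])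

end WKAutomaton

/-- Equality of languages modulo the empty word. -/
def EqModLambda {T : Type} (L₁ L₂ : Set (List T)) : Prop :=
  ∀ w : List T, w ≠ [] → (w ∈ L₁ ↔ w ∈ L₂)

/-- `L` is accepted (modulo the empty word) by some sensing 5'→3' WK automaton
with a finite state set satisfying the property `P`. -/
def AcceptsWith (T : Type) (P : ∀ Q : Type, WKAutomaton T Q → Prop)
    (L : Set (List T)) : Prop :=
  ∃ (Q : Type) (_ : Finite Q) (A : WKAutomaton T Q), P Q A ∧ EqModLambda A.Lang L

/-- The language `{ a²ⁿb²ⁿ : n ≥ 0 } ∪ { a²⁽ⁿ⁺¹⁾b²ⁿ : n ≥ 0 }`. -/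
def Leven : Set (List Letter) :=
  {w | (∃ n : ℕ, w = List.replicate (2 * n) a ++ List.replicate (2 * n) b) ∨
       (∃ n : ℕ, w = List.replicate (2 * (n + 1)) a ++ List.replicate (2 * n) b)}

-- auxiliary development (to be inserted above the theorem)

open Letter

/-- Transition function for the witness automaton. -/
def Aδ (q : Bool) (x y : List Letter) : Set Bool :=
  if q = false ∧ x = [a, a] ∧ y = ([] : List Letter) then {true}
  else if q = true ∧ x = ([] : List Letter) ∧ y = [b, b] then {false}
  else ∅

lemma mem_Aδ {p q : Bool} {x y : List Letter} :
    p ∈ Aδ q x y ↔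
      (q = false ∧ x = [a, a] ∧ y = [] ∧ p = true) ∨
      (q = true ∧ x = [] ∧ y = [b, b] ∧ p = false) := by
  unfold Aδ
  split_ifs with h1 h2 <;> simp_all [Set.mem_singleton_iff]

/-- The witness qDFS automaton. -/
def WA : WKAutomaton Letter Bool where
  q0 := false
  F := Set.univ
  δ := Aδ
  finite_delta := by
    refine Set.Finite.subset
      ((Set.finite_singleton ((true : Bool), (([] : List Letter), [b,b]))).insert
        (false, ([a,a], ([] : List Letter)))) ?_
    rintro ⟨q, x, y⟩ ⟨p, hp⟩
    rcases mem_Aδ.mp hp with ⟨h1, h2, h3, _⟩ | ⟨h1, h2, h3, _⟩ <;> subst h1 <;> subst h2 <;>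
      subst h3 <;> simp

lemma step_false {w : List Letter} :
    WA.Step (false, [a, a] ++ w) (true, w) :=
  ⟨[a, a], [], by simp, mem_Aδ.mpr (Or.inl ⟨rfl, rfl, rfl, rfl⟩)⟩

lemma step_true {w : List Letter} :
    WA.Step (true, w ++ [b, b]) (false, w) :=
  ⟨[], [b, b], by simp, mem_Aδ.mpr (Or.inr ⟨rfl, rfl, rfl, rfl⟩)⟩

lemma rep_a (n : ℕ) :
    List.replicate (2 * (n + 1)) a = [a, a] ++ List.replicate (2 * n) a := by
  have : 2 * (n + 1) = (2 * n) + 1 + 1 := by ring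
  simp [this, List.replicate_succ]

lemma rep_b (n : ℕ) :
    List.replicate (2 * (n + 1)) b = List.replicate (2 * n) b ++ [b, b] := by
  have : 2 * (n + 1) = (2 * n) + 1 + 1 := by ring
  rw [this, List.replicate_succ', List.replicate_succ']
  simp

lemma reach_false (n : ℕ) :
    Relation.ReflTransGen WA.Step
      (false, List.replicate (2 * n) a ++ List.replicate (2 * n) b) (false, []) := by
  induction n with
  | zero => simp [Relation.ReflTransGen.refl]
  | succ n ih =>
    have h1 : WA.Step (false, List.replicate (2 * (n + 1)) a ++ List.replicate (2 * (n + 1)) b)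
        (true, List.replicate (2 * n) a ++ List.replicate (2 * (n + 1)) b) := by
      rw [rep_a]; simpa using step_false
    have h2 : WA.Step (true, List.replicate (2 * n) a ++ List.replicate (2 * (n + 1)) b)
        (false, List.replicate (2 * n) a ++ List.replicate (2 * n) b) := by
      rw [rep_b, ← List.append_assoc]; exact step_true
    exact (Relation.ReflTransGen.head h1 (Relation.ReflTransGen.head h2 ih))

lemma reach_true (n : ℕ) :
    Relation.ReflTransGen WA.Step
      (true, List.replicate (2 * n) a ++ List.replicate (2 * n) b) (true, []) := by
  induction n with
  | zero => simp [Relation.ReflTransGen.refl]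
  | succ n ih =>
    have h1 : WA.Step (true, List.replicate (2 * (n + 1)) a ++ List.replicate (2 * (n + 1)) b)
        (false, List.replicate (2 * (n + 1)) a ++ List.replicate (2 * n) b) := by
      rw [rep_b (n := n), ← List.append_assoc]; exact step_true
    have h2 : WA.Step (false, List.replicate (2 * (n + 1)) a ++ List.replicate (2 * n) b)
        (true, List.replicate (2 * n) a ++ List.replicate (2 * n) b) := by
      rw [rep_a]; simpa using step_false
    exact (Relation.ReflTransGen.head h1 (Relation.ReflTransGen.head h2 ih))

/-- Words consumable from state `true`. -/
def Ltrue : Set (List Letter) :=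
  {w | (∃ n : ℕ, w = List.replicate (2 * n) a ++ List.replicate (2 * n) b) ∨
       (∃ n : ℕ, w = List.replicate (2 * n) a ++ List.replicate (2 * (n + 1)) b)}

lemma Ltrue_cons (w : List Letter) (hw : w ∈ Ltrue) : [a, a] ++ w ∈ Leven := by
  rcases hw with ⟨n, rfl⟩ | ⟨n, rfl⟩
  · exact Or.inr ⟨n, by rw [rep_a, List.append_assoc]⟩
  · exact Or.inl ⟨n + 1, by rw [rep_a, List.append_assoc]⟩

lemma Leven_snoc (w : List Letter) (hw : w ∈ Leven) : w ++ [b, b] ∈ Ltrue := by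
  rcases hw with ⟨n, rfl⟩ | ⟨n, rfl⟩
  · exact Or.inr ⟨n, by rw [rep_b, List.append_assoc]⟩
  · exact Or.inl ⟨n + 1, by rw [rep_b, List.append_assoc]⟩

lemma lang_sub {c0 c : Bool × List Letter}
    (h : Relation.ReflTransGen WA.Step c0 c) (hc : c.2 = []) :
    (c0.1 = false → c0.2 ∈ Leven) ∧ (c0.1 = true → c0.2 ∈ Ltrue) := by
  induction h using Relation.ReflTransGen.head_induction_on with
  | refl =>
    constructor <;> intro _ <;> (rw [hc]; exact Or.inl ⟨0, by simp⟩)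
  | @head d e hstep htail ih =>
    obtain ⟨x, y, heqd, hmem⟩ := hstep
    rcases mem_Aδ.mp hmem with ⟨h1, h2, h3, h4⟩ | ⟨h1, h2, h3, h4⟩
    · refine ⟨fun _ => ?_, fun ht => by rw [h1] at ht; simp at ht⟩
      have hm : e.2 ∈ Ltrue := ih.2 h4
      rw [heqd, h2, h3]
      simpa using Ltrue_cons _ hm
    · refine ⟨fun ht => by rw [h1] at ht; simp at ht, fun _ => ?_⟩
      have hm : e.2 ∈ Leven := ih.1 h4
      rw [heqd, h2, h3]
      simpa using Leven_snoc _ hm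

lemma WA_lang : WA.Lang = Leven := by
  ext w
  constructor
  · rintro ⟨qf, _, h⟩
    exact (lang_sub h rfl).1 rfl
  · rintro (⟨n, rfl⟩ | ⟨n, rfl⟩)
    · exact ⟨false, trivial, reach_false n⟩
    · refine ⟨true, trivial, Relation.ReflTransGen.head ?_ (reach_true n)⟩
      rw [rep_a]; show WA.Step (false, _) _; simpa using step_false

lemma Leven_even {w : List Letter} (hw : w ∈ Leven) : Even w.length := by
  rcases hw with ⟨n, rfl⟩ | ⟨n, rfl⟩
  · simp only [List.length_append, List.length_replicate]
    exact ⟨2 * n, by ring⟩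
  · simp only [List.length_append, List.length_replicate]
    exact ⟨2 * n + 1, by ring⟩


/-- The class of languages accepted by quasi-deterministic all-final simple (qDFS)
sensing 5'→3' WK automata properly includes the class of languages accepted by
quasi-deterministic all-final 1-limited (qDF1) sensing 5'→3' WK automata:
every 1-limited automaton is simple (so every qDF1 automaton is a qDFS
automaton), and `{ a²ⁿb²ⁿ } ∪ { a²⁽ⁿ⁺¹⁾b²ⁿ }` is accepted by a qDFS sensing
5'→3' WK automaton but by no qDF1 sensing 5'→3' WK automaton. -/
theorem qDF1_proper_subset_qDFS :
    (∀ (T Q : Type) (A : WKAutomaton T Q), A.OneLimited → A.Simple) ∧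
    (∀ (T : Type) (L : Set (List T)),
      AcceptsWith T (fun _ A => A.QuasiDet ∧ A.AllFinal ∧ A.OneLimited) L →
      AcceptsWith T (fun _ A => A.QuasiDet ∧ A.AllFinal ∧ A.Simple) L) ∧
    AcceptsWith Letter (fun _ A => A.QuasiDet ∧ A.AllFinal ∧ A.Simple) Leven ∧
    ¬ AcceptsWith Letter (fun _ A => A.QuasiDet ∧ A.AllFinal ∧ A.OneLimited) Leven := by
  have hOL : ∀ (T Q : Type) (A : WKAutomaton T Q), A.OneLimited → A.Simple := by
    intro T Q A h q u v hne
    rcases h q u v hne with ⟨hu, _⟩ | ⟨_, hv⟩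
    · exact Or.inl hu
    · exact Or.inr hv
  refine ⟨hOL, ?_, ?_, ?_⟩
  · rintro T L ⟨Q, hQ, A, ⟨h1, h2, h3⟩, h4⟩
    exact ⟨Q, hQ, A, ⟨h1, h2, hOL T Q A h3⟩, h4⟩
  · refine ⟨Bool, inferInstance, WA, ⟨?_, rfl, ?_⟩, ?_⟩
    · -- quasi-deterministic
      rintro q w p r u v ⟨x₁, y₁, _, hm1⟩ ⟨x₂, y₂, _, hm2⟩
      rcases mem_Aδ.mp hm1 with ⟨hq1, _, _, hp1⟩ | ⟨hq1, _, _, hp1⟩ <;>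
        rcases mem_Aδ.mp hm2 with ⟨hq2, _, _, hp2⟩ | ⟨hq2, _, _, hp2⟩ <;> simp_all
    · -- simple
      rintro q u v ⟨p, hp⟩
      rcases mem_Aδ.mp hp with ⟨_, _, h3, _⟩ | ⟨_, h2, _, _⟩
      · exact Or.inr h3
      · exact Or.inl h2
    · intro w _
      rw [WA_lang]
  · rintro ⟨Q, hQ, A, ⟨hqd, hF, h1l⟩, heq⟩
    -- [a,a] ∈ Leven
    have haa : ([a, a] : List Letter) ∈ Leven := Or.inr ⟨0, by simp⟩
    have haaL : ([a, a] : List Letter) ∈ A.Lang := (heq [a, a] (by simp)).mpr haa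
    obtain ⟨qf, _, hcomp⟩ := haaL
    rcases hcomp.cases_head with hEq | ⟨c, hstep, _⟩
    · exact absurd (congrArg (fun p => p.2) hEq) (by simp)
    obtain ⟨x, y, hxy, hmem⟩ := hstep
    have hxyl := h1l A.q0 x y ⟨c.1, hmem⟩
    -- in either case x ++ y = [a]
    have hxy1 : x ++ y = [a] := by
      rcases hxyl with ⟨hx, hy⟩ | ⟨hx, hy⟩
      · subst hx
        obtain ⟨d, rfl⟩ := List.length_eq_one_iff.mp hy
        simp only [List.nil_append] at hxy ⊢
        have hl : c.2.length = 1 := by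
          have := congrArg List.length hxy
          simp at this; omega
        obtain ⟨e, he⟩ := List.length_eq_one_iff.mp hl
        rw [he] at hxy
        simp at hxy
        simp [← hxy.2]
      · subst hy
        obtain ⟨d, rfl⟩ := List.length_eq_one_iff.mp hx
        simp only [List.append_nil] at hxy ⊢
        have hl : c.2.length = 1 := by
          have := congrArg List.length hxy
          simp at this; omega
        obtain ⟨e, he⟩ := List.length_eq_one_iff.mp hl
        rw [he] at hxy
        simp at hxy
        simp [← hxy.1]
    have hstep1 : A.Step (A.q0, [a]) (c.1, []) :=
      ⟨x, y, by simpa using hxy1.symm, hmem⟩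
    have haL : ([a] : List Letter) ∈ A.Lang :=
      ⟨c.1, by rw [hF]; trivial, Relation.ReflTransGen.single hstep1⟩
    have : ([a] : List Letter) ∈ Leven := (heq [a] (by simp)).mp haL
    have := Leven_even this
    simp [Nat.even_iff] at this
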